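/- Suppose F is algebraically closed and E, E' are finite subgroups of (F, +), both of rank 4. Assume the following six equalities hold (each of the form M(E)·N(E') = M(E')·N(E)): (1) d_{1,4}(E)^{p^3+p^2+p+1} d_{4,4}(E')^{p^3} = d_{1,4}(E')^{p^3+p^2+p+1} d_{4,4}(E)^{p^3}; (2) d_{2,4}(E)^{p^2+1} d_{4,4}(E')^{p^2} = d_{2,4}(E')^{p^2+1} d_{4,4}(E)^{p^2}; (3) d_{3,4}(E)^{p^3+p^2+p+1} d_{4,4}(E')^{p^3+p^2+p} = d_{3,4}(E')^{p^3+p^2+p+1} d_{4,4}(E)^{p^3+p^2+p}; (4) d_{1,4}(E)^{p^2+p} d_{2,4}(E) d_{4,4}(E')^{p^2} = d_{1,4}(E')^{p^2+p} d_{2,4}(E') d_{4,4}(E)^{p^2}; (5) d_{1,4}(E)^{p} d_{3,4}(E) d_{4,4}(E')^{p} = d_{1,4}(E')^{p} d_{3,4}(E') d_{4,4}(E)^{p}; (6) d_{2,4}(E) d_{3,4}(E)^{p^3+p^2} d_{4,4}(E')^{p^3+p^2} = d_{2,4}(E') d_{3,4}(E')^{p^3+p^2} d_{4,4}(E)^{p^3+p^2}.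 Then E' = α•E for some α ∈ F^×. -/

import Mathlib

open Polynomial Pointwise

/-- `dCoef p r i E` is the Dickson-type coefficient `d_{i,r}(E)`: the coefficient of
`X ^ (p ^ (r - i))` in `∏_{c ∈ E} (X - c)`. -/
noncomputable def dCoef {F : Type*} [Field F] (p r i : ℕ)
    (E : AddSubgroup F) [Fintype E] : F :=
  (∏ c : E, (X - C (c : F))).coeff (p ^ (r - i))


/-- A polynomial over an infinite field of characteristic `p` with surjective
`p`-power map, whose evaluation map is additive, has nonzero coefficients only
in `p`-power degrees. -/
theorem addpoly_coeff_eq_zero {F : Type*} [Field F] [Infinite F] {p : ℕ} (hp : p.Prime)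
    [CharP F p] (hfrob : ∀ x : F, ∃ y : F, y ^ p = x) :
    ∀ (n : ℕ) (f : F[X]), f.natDegree ≤ n →
      (∀ x y : F, f.eval (x + y) = f.eval x + f.eval y) →
      ∀ m : ℕ, (∀ i : ℕ, m ≠ p ^ i) → f.coeff m = 0 := by
  intro n
  induction n using Nat.strong_induction_on with
  | _ n IH =>
    intro f hfd hf m hm
    have h0 : f.eval 0 = 0 := by
      have h := hf 0 0
      simp only [add_zero] at h
      exact (right_eq_add.mp h)
    rcases Nat.eq_zero_or_pos m with rfl | hm0
    · rwa [coeff_zero_eq_eval_zero]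
    rcases lt_or_ge f.natDegree m with hlt | hge
    · exact coeff_eq_zero_of_natDegree_lt hlt
    have hn1 : 1 ≤ n := le_trans (le_trans hm0 hge) hfd
    have step : ∀ y : F, f.comp (X + C y) = f + C (f.eval y) := by
      intro y
      apply Polynomial.funext
      intro x
      rw [eval_comp]
      simp [hf]
    have hderC : derivative f = C ((derivative f).eval 0) := by
      apply Polynomial.funext
      intro y
      have h1 := congrArg derivative (step y)
      rw [derivative_comp] at h1
      simp only [derivative_add, derivative_X, derivative_C, add_zero, one_mul] at h1
      have h2 := congrArg (eval 0) h1
      rw [eval_comp] at h2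
      simp only [eval_add, eval_X, eval_C, zero_add] at h2
      rw [eval_C]
      exact h2
    set c := (derivative f).eval 0 with hc
    set g : F[X] := f - C c * X with hg
    have hdg : derivative g = 0 := by
      rw [hg, derivative_sub, derivative_C_mul, derivative_X, mul_one, ← hderC, sub_self]
    haveI : Fact p.Prime := ⟨hp⟩
    have hgexp : expand F p (contract p g) = g := expand_contract p hdg hp.ne_zero
    set G := contract p g with hG
    have hGeval : ∀ x : F, G.eval (x ^ p) = g.eval x := by
      intro x
      conv_rhs => rw [← hgexp]
      rw [expand_eval]
    have hgeval : ∀ x : F, g.eval x = f.eval x - c * x := by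
      intro x; simp [hg]
    have hGadd : ∀ x y : F, G.eval (x + y) = G.eval x + G.eval y := by
      intro x y
      obtain ⟨u, rfl⟩ := hfrob x
      obtain ⟨v, rfl⟩ := hfrob y
      rw [← add_pow_char, hGeval, hGeval, hGeval, hgeval, hgeval, hgeval, hf]
      ring
    have hgd : g.natDegree ≤ n := by
      refine le_trans (natDegree_sub_le _ _) ?_
      simp only [max_le_iff]
      refine ⟨hfd, le_trans (natDegree_C_mul_le _ _) ?_⟩
      simpa [natDegree_X] using hn1
    have hGd : G.natDegree < n := by
      have hh : G.natDegree * p = g.natDegree := by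
        rw [← natDegree_expand, hgexp]
      by_contra hcon
      push_neg at hcon
      have h2 : n * 2 ≤ G.natDegree * p := Nat.mul_le_mul hcon hp.two_le
      rw [hh] at h2
      omega
    have hm1 : m ≠ 1 := by simpa using hm 0
    have hcoeffg : f.coeff m = g.coeff m := by
      rw [hg]
      simp [coeff_sub, coeff_C_mul, coeff_X, Ne.symm hm1]
    rw [hcoeffg, ← hgexp, coeff_expand hp.pos]
    split_ifs with hdvd
    · refine IH G.natDegree hGd G le_rfl hGadd (m / p) ?_
      intro i hi
      exact hm (i + 1) (by rw [pow_succ, ← hi, Nat.div_mul_cancel hdvd])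
    · rfl

theorem sgPoly_facts {F : Type*} [Field F] [IsAlgClosed F] {p : ℕ} (hp : p.Prime) [CharP F p]
    (E : AddSubgroup F) [Fintype E] (hcard : Fintype.card E = p ^ 4) :
    (∀ x : F, (∏ c : E, (X - C (c : F))).eval x = 0 ↔ x ∈ E) ∧
    (∏ c : E, (X - C (c : F))).coeff 1 ≠ 0 ∧
    (∀ x : F,
      (∏ c : E, (X - C (c : F))).eval x =
        x ^ p ^ 4 + (∏ c : E, (X - C (c : F))).coeff (p ^ 3) * x ^ p ^ 3 +
          (∏ c : E, (X - C (c : F))).coeff (p ^ 2) * x ^ p ^ 2 +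
          (∏ c : E, (X - C (c : F))).coeff p * x ^ p +
          (∏ c : E, (X - C (c : F))).coeff 1 * x) := by
  haveI : Fact p.Prime := ⟨hp⟩
  set P : F[X] := ∏ c : E, (X - C (c : F)) with hP
  have hmonic : P.Monic := monic_prod_of_monic _ _ fun c _ => monic_X_sub_C _
  have hdeg : P.natDegree = p ^ 4 := by
    rw [hP, natDegree_prod _ _ fun c _ => X_sub_C_ne_zero _]
    simp [natDegree_X_sub_C, hcard]
  have hroot : ∀ x : F, P.eval x = 0 ↔ x ∈ E := by
    intro x
    rw [hP, eval_prod]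
    simp only [eval_sub, eval_X, eval_C]
    rw [Finset.prod_eq_zero_iff]
    constructor
    · rintro ⟨c, -, hc⟩
      have hx : x = (c : F) := sub_eq_zero.mp hc
      rw [hx]; exact c.2
    · intro hx
      exact ⟨⟨x, hx⟩, Finset.mem_univ _, sub_self x⟩
  have htrans : ∀ c : E, P.comp (X + C (c : F)) = P := by
    intro c
    rw [hP, prod_comp]
    refine Fintype.prod_equiv (Equiv.subRight c) _ _ fun d => ?_
    simp only [sub_comp, X_comp, C_comp, Equiv.subRight_apply, AddSubgroup.coe_sub, C_sub]
    ring
  have hstep : ∀ y : F, P.comp (X + C y) = P + C (P.eval y) := by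
    intro y
    have hcm := hmonic.comp_X_add_C y
    have hdc : (P.comp (X + C y)).natDegree = p ^ 4 := by
      rw [natDegree_comp]
      simp [hdeg]
    have hQ : P.comp (X + C y) - P - C (P.eval y) = 0 := by
      apply eq_zero_of_natDegree_lt_card_of_eval_eq_zero _
        (Subtype.val_injective : Function.Injective ((↑) : E → F))
      · intro c
        simp only [eval_sub, eval_comp, eval_add, eval_X, eval_C]
        have he1 : P.eval ((c : F) + y) = P.eval y := by
          have h := congrArg (eval y) (htrans c)
          rw [eval_comp] at h
          simp only [eval_add, eval_X, eval_C] at h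
          rw [add_comm]
          exact h
        have he2 : P.eval (c : F) = 0 := (hroot _).2 c.2
        rw [he1, he2]
        ring
      · rw [hcard]
        have hsub : (P.comp (X + C y) - P).natDegree < p ^ 4 := by
          by_cases hz : P.comp (X + C y) - P = 0
          · rw [hz]
            simpa using pow_pos hp.pos 4
          · rw [natDegree_lt_iff_degree_lt hz]
            have hdd : degree (P.comp (X + C y)) = degree P := by
              rw [degree_eq_natDegree hcm.ne_zero, degree_eq_natDegree hmonic.ne_zero, hdc, hdeg]
            have := degree_sub_lt hdd hcm.ne_zero (by rw [hcm.leadingCoeff, hmonic.leadingCoeff])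
            rwa [degree_eq_natDegree hcm.ne_zero, hdc] at this
        calc (P.comp (X + C y) - P - C (P.eval y)).natDegree
            ≤ max (P.comp (X + C y) - P).natDegree (C (P.eval y)).natDegree :=
              natDegree_sub_le _ _
          _ < p ^ 4 := by
              rw [natDegree_C]
              simp only [max_lt_iff]
              exact ⟨hsub, pow_pos hp.pos 4⟩
    rw [sub_sub, sub_eq_zero] at hQ
    exact hQ
  have hadd : ∀ x y : F, P.eval (x + y) = P.eval x + P.eval y := by
    intro x y
    have h := congrArg (eval x) (hstep y)
    rw [eval_comp] at h
    simpa using h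
  have hcoeff : ∀ m : ℕ, (∀ i : ℕ, m ≠ p ^ i) → P.coeff m = 0 := fun m hm =>
    addpoly_coeff_eq_zero hp (fun x => IsAlgClosed.exists_pow_nat_eq x hp.pos)
      P.natDegree P le_rfl hadd m hm
  have heval : ∀ x : F,
      P.eval x = x ^ p ^ 4 + P.coeff (p ^ 3) * x ^ p ^ 3 + P.coeff (p ^ 2) * x ^ p ^ 2 +
        P.coeff p * x ^ p + P.coeff 1 * x := by
    intro x
    rw [eval_eq_sum_range, hdeg]
    have hsubset : (Finset.range 5).image (fun i => p ^ i) ⊆ Finset.range (p ^ 4 + 1) := by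
      intro t ht
      simp only [Finset.mem_image, Finset.mem_range] at ht ⊢
      obtain ⟨i, hi, rfl⟩ := ht
      exact Nat.lt_succ_of_le (Nat.pow_le_pow_right hp.pos (by omega))
    rw [← Finset.sum_subset hsubset ?_]
    · rw [Finset.sum_image (fun i _ j _ hij => Nat.pow_right_injective hp.two_le hij)]
      rw [Finset.sum_range_succ, Finset.sum_range_succ, Finset.sum_range_succ,
        Finset.sum_range_succ, Finset.sum_range_one]
      have hlead : P.coeff (p ^ 4) = 1 := by
        rw [← hdeg]
        exact hmonic.coeff_natDegree
      rw [hlead, pow_zero, pow_one]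
      ring
    · intro t ht hts
      have hz : P.coeff t = 0 := by
        apply hcoeff
        intro i hit
        apply hts
        simp only [Finset.mem_range] at ht
        simp only [Finset.mem_image, Finset.mem_range]
        refine ⟨i, ?_, hit.symm⟩
        have h1 : p ^ i ≤ p ^ 4 := by omega
        have h2 : i ≤ 4 := (Nat.pow_le_pow_iff_right hp.one_lt).mp h1
        omega
      rw [hz, zero_mul]
  have hsep : P.Separable := by
    rw [hP]
    exact separable_prod_X_sub_C_iff.2 Subtype.val_injective
  have hderC : derivative P = C (P.coeff 1) := by
    ext n
    rw [coeff_derivative, coeff_C]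
    rcases n with _ | n
    · simp
    · simp only [Nat.succ_ne_zero, if_false]
      by_cases hpi : ∃ i : ℕ, n + 1 + 1 = p ^ i
      · obtain ⟨i, hi⟩ := hpi
        have hine : i ≠ 0 := by
          rintro rfl
          simp at hi
        have : ((n + 1 + 1 : ℕ) : F) = 0 := by
          rw [hi]
          push_cast
          rw [CharP.cast_eq_zero F p]
          exact zero_pow hine
        push_cast at this ⊢
        rw [this, mul_zero]
      · push_neg at hpi
        rw [hcoeff (n + 1 + 1) hpi, zero_mul]
  have hd1 : P.coeff 1 ≠ 0 := by
    intro hzero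
    have hdz : derivative P = 0 := by rw [hderC, hzero, map_zero]
    have hcop : IsCoprime P (derivative P) := hsep
    rw [hdz] at hcop
    have hu : IsUnit P := isCoprime_zero_right.mp hcop
    have hnd := natDegree_eq_zero_of_isUnit hu
    rw [hdeg] at hnd
    have := pow_pos hp.pos 4
    omega
  exact ⟨hroot, hd1, heval⟩

theorem exists_scale {F : Type*} [Field F] [IsAlgClosed F] (c d : F) (hc : c ≠ 0) (hd : d ≠ 0)
    (n : ℕ) (hn : 2 ≤ n) : ∃ α : F, α ≠ 0 ∧ α ^ n * c = d * α := by
  obtain ⟨m, rfl⟩ : ∃ m, n = m + 1 := ⟨n - 1, by omega⟩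
  obtain ⟨β, hβ⟩ := IsAlgClosed.exists_pow_nat_eq (d / c) (n := m) (by omega)
  have hβne : β ≠ 0 := by
    rintro rfl
    rw [zero_pow (by omega : m ≠ 0), eq_comm, _root_.div_eq_zero_iff] at hβ
    exact hβ.elim hd hc
  refine ⟨β, hβne, ?_⟩
  rw [pow_succ, hβ]
  field_simp

theorem zero_iff_of_rel {F : Type*} [Field F] {a b c d : F} {s : ℕ} (hs : s ≠ 0)
    (hc : c ≠ 0) (hd : d ≠ 0) (h : a ^ s * c = b ^ s * d) : a = 0 ↔ b = 0 := by
  constructor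
  · rintro rfl
    rw [zero_pow hs, zero_mul, eq_comm, mul_eq_zero] at h
    rcases h with h | h
    · exact pow_eq_zero_iff hs |>.mp h
    · exact absurd h hd
  · rintro rfl
    rw [zero_pow hs, zero_mul, mul_eq_zero] at h
    rcases h with h | h
    · exact pow_eq_zero_iff hs |>.mp h
    · exact absurd h hc

/-- Over an algebraically closed `F`, the six invariants
`v_1, v_2, v_3, v_{12}, v_{13}, v_{32}` separate the dilation classes of finite
subgroups of rank `4`. -/
theorem statement9 {F : Type*} [Field F] [IsAlgClosed F] {p : ℕ} [Fact p.Prime]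
    [CharP F p] (E E' : AddSubgroup F) [Fintype E] [Fintype E']
    (hE : Fintype.card E = p ^ 4) (hE' : Fintype.card E' = p ^ 4)
    (h1 : dCoef p 4 1 E ^ (p ^ 3 + p ^ 2 + p + 1) * dCoef p 4 4 E' ^ p ^ 3 =
      dCoef p 4 1 E' ^ (p ^ 3 + p ^ 2 + p + 1) * dCoef p 4 4 E ^ p ^ 3)
    (h2 : dCoef p 4 2 E ^ (p ^ 2 + 1) * dCoef p 4 4 E' ^ p ^ 2 =
      dCoef p 4 2 E' ^ (p ^ 2 + 1) * dCoef p 4 4 E ^ p ^ 2)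
    (h3 : dCoef p 4 3 E ^ (p ^ 3 + p ^ 2 + p + 1) * dCoef p 4 4 E' ^ (p ^ 3 + p ^ 2 + p) =
      dCoef p 4 3 E' ^ (p ^ 3 + p ^ 2 + p + 1) * dCoef p 4 4 E ^ (p ^ 3 + p ^ 2 + p))
    (h4 : dCoef p 4 1 E ^ (p ^ 2 + p) * dCoef p 4 2 E * dCoef p 4 4 E' ^ p ^ 2 =
      dCoef p 4 1 E' ^ (p ^ 2 + p) * dCoef p 4 2 E' * dCoef p 4 4 E ^ p ^ 2)
    (h5 : dCoef p 4 1 E ^ p * dCoef p 4 3 E * dCoef p 4 4 E' ^ p =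
      dCoef p 4 1 E' ^ p * dCoef p 4 3 E' * dCoef p 4 4 E ^ p)
    (h6 : dCoef p 4 2 E * dCoef p 4 3 E ^ (p ^ 3 + p ^ 2) * dCoef p 4 4 E' ^ (p ^ 3 + p ^ 2) =
      dCoef p 4 2 E' * dCoef p 4 3 E' ^ (p ^ 3 + p ^ 2) * dCoef p 4 4 E ^ (p ^ 3 + p ^ 2)) :
    ∃ α : F, α ≠ 0 ∧ (E' : Set F) = α • (E : Set F) := by
  have hp : p.Prime := Fact.out
  obtain ⟨hroot, ha4, hevalE⟩ := sgPoly_facts hp E hE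
  obtain ⟨hroot', hb4, hevalE'⟩ := sgPoly_facts hp E' hE'
  have hdc : ∀ (E₀ : AddSubgroup F) (_ : Fintype E₀),
      dCoef p 4 1 E₀ = (∏ c : E₀, (X - C (c : F))).coeff (p ^ 3) ∧
      dCoef p 4 2 E₀ = (∏ c : E₀, (X - C (c : F))).coeff (p ^ 2) ∧
      dCoef p 4 3 E₀ = (∏ c : E₀, (X - C (c : F))).coeff p ∧
      dCoef p 4 4 E₀ = (∏ c : E₀, (X - C (c : F))).coeff 1 := by
    intro E₀ inst
    exact ⟨by norm_num [dCoef], by norm_num [dCoef], by norm_num [dCoef], by norm_num [dCoef]⟩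
  obtain ⟨e1, e2, e3, e4⟩ := hdc E ‹_›
  obtain ⟨f1, f2, f3, f4⟩ := hdc E' ‹_›
  set a1 := dCoef p 4 1 E with ha1d
  set a2 := dCoef p 4 2 E with ha2d
  set a3 := dCoef p 4 3 E with ha3d
  set a4 := dCoef p 4 4 E with ha4d
  set b1 := dCoef p 4 1 E' with hb1d
  set b2 := dCoef p 4 2 E' with hb2d
  set b3 := dCoef p 4 3 E' with hb3d
  set b4 := dCoef p 4 4 E' with hb4d
  rw [← e4] at ha4
  rw [← f4] at hb4
  have hevala : ∀ x : F, (∏ c : E, (X - C (c : F))).eval x =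
      x ^ p ^ 4 + a1 * x ^ p ^ 3 + a2 * x ^ p ^ 2 + a3 * x ^ p + a4 * x := by
    intro x
    rw [hevalE x, ← e1, ← e2, ← e3, ← e4]
  have hevalb : ∀ x : F, (∏ c : E', (X - C (c : F))).eval x =
      x ^ p ^ 4 + b1 * x ^ p ^ 3 + b2 * x ^ p ^ 2 + b3 * x ^ p + b4 * x := by
    intro x
    rw [hevalE' x, ← f1, ← f2, ← f3, ← f4]
  -- the master reduction
  have hmain : ∀ α : F, α ≠ 0 →
      b1 * α ^ p ^ 3 = α ^ p ^ 4 * a1 →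
      b2 * α ^ p ^ 2 = α ^ p ^ 4 * a2 →
      b3 * α ^ p = α ^ p ^ 4 * a3 →
      b4 * α = α ^ p ^ 4 * a4 →
      ∃ α' : F, α' ≠ 0 ∧ (E' : Set F) = α' • (E : Set F) := by
    intro α hα S1 S2 S3 S4
    refine ⟨α, hα, ?_⟩
    have hkey : ∀ z : F, (∏ c : E', (X - C (c : F))).eval (α * z) =
        α ^ p ^ 4 * (∏ c : E, (X - C (c : F))).eval z := by
      intro z
      rw [hevalb (α * z), hevala z]
      linear_combination z ^ p ^ 3 * S1 + z ^ p ^ 2 * S2 + z ^ p * S3 + z * S4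
    ext x
    simp only [SetLike.mem_coe, Set.mem_smul_set, smul_eq_mul]
    constructor
    · intro hx
      refine ⟨α⁻¹ * x, ?_, by field_simp⟩
      have h0 : (∏ c : E', (X - C (c : F))).eval x = 0 := (hroot' x).2 hx
      have hk := hkey (α⁻¹ * x)
      rw [show α * (α⁻¹ * x) = x by field_simp, h0] at hk
      rw [← hroot]
      exact ((mul_eq_zero.mp hk.symm).resolve_left (pow_ne_zero _ hα))
    · rintro ⟨y, hy, rfl⟩
      rw [← hroot', hkey y, (hroot y).2 hy, mul_zero]
  -- zero iffs
  have hTne : p ^ 3 + p ^ 2 + p + 1 ≠ 0 := by positivity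
  have hiff1 : a1 = 0 ↔ b1 = 0 :=
    zero_iff_of_rel hTne (pow_ne_zero _ hb4) (pow_ne_zero _ ha4) h1
  have hiff2 : a2 = 0 ↔ b2 = 0 :=
    zero_iff_of_rel (by positivity) (pow_ne_zero _ hb4) (pow_ne_zero _ ha4) h2
  have hiff3 : a3 = 0 ↔ b3 = 0 :=
    zero_iff_of_rel hTne (pow_ne_zero _ hb4) (pow_ne_zero _ ha4) h3
  by_cases ha1 : a1 = 0
  · have hb1 : b1 = 0 := hiff1.mp ha1
    by_cases ha3 : a3 = 0
    · have hb3 : b3 = 0 := hiff3.mp ha3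
      by_cases ha2 : a2 = 0
      · -- Case D
        have hb2 : b2 = 0 := hiff2.mp ha2
        obtain ⟨α, hα, K⟩ := exists_scale a4 b4 ha4 hb4 (p ^ 4)
          (le_trans hp.two_le (Nat.le_self_pow (by norm_num) p))
        refine hmain α hα ?_ ?_ ?_ K.symm
        · rw [ha1, hb1]; ring
        · rw [ha2, hb2]; ring
        · rw [ha3, hb3]; ring
      · -- Case C
        have hb2 : b2 ≠ 0 := fun h => ha2 (hiff2.mpr h)
        obtain ⟨α, hα, K⟩ := exists_scale (a4 * b2) (b4 * a2) (mul_ne_zero ha4 hb2)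
          (mul_ne_zero hb4 ha2) (p ^ 2)
          (le_trans hp.two_le (Nat.le_self_pow (by norm_num) p))
        have hKR : (b4 * a2) * α ≠ 0 := mul_ne_zero (mul_ne_zero hb4 ha2) hα
        have hh2R : b2 ^ (p ^ 2 + 1) * a4 ^ p ^ 2 ≠ 0 :=
          mul_ne_zero (pow_ne_zero _ hb2) (pow_ne_zero _ ha4)
        have S4 : b4 * α = α ^ p ^ 4 * a4 := by
          have M : (b4 * α) * (α ^ p ^ 2 * (a4 * b2)) ^ (p ^ 2 + 1) *
              (a2 ^ (p ^ 2 + 1) * b4 ^ p ^ 2) =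
            (α ^ p ^ 4 * a4) * ((b4 * a2) * α) ^ (p ^ 2 + 1) *
              (b2 ^ (p ^ 2 + 1) * a4 ^ p ^ 2) := by ring
          rw [K, h2] at M
          exact mul_right_cancel₀ (pow_ne_zero _ hKR) (mul_right_cancel₀ hh2R M)
        have S2 : b2 * α ^ p ^ 2 = α ^ p ^ 4 * a2 := by
          have M : (b2 * α ^ p ^ 2) * (α ^ p ^ 2 * (a4 * b2)) ^ p ^ 2 *
              (a2 ^ (p ^ 2 + 1) * b4 ^ p ^ 2) =
            (α ^ p ^ 4 * a2) * ((b4 * a2) * α) ^ p ^ 2 *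
              (b2 ^ (p ^ 2 + 1) * a4 ^ p ^ 2) := by ring
          rw [K, h2] at M
          exact mul_right_cancel₀ (pow_ne_zero _ hKR) (mul_right_cancel₀ hh2R M)
        refine hmain α hα ?_ S2 ?_ S4
        · rw [ha1, hb1]; ring
        · rw [ha3, hb3]; ring
    · -- Case B
      have hb3 : b3 ≠ 0 := fun h => ha3 (hiff3.mpr h)
      obtain ⟨α, hα, K⟩ := exists_scale (a4 * b3) (b4 * a3) (mul_ne_zero ha4 hb3)
        (mul_ne_zero hb4 ha3) p hp.two_le
      have hKR : (b4 * a3) * α ≠ 0 := mul_ne_zero (mul_ne_zero hb4 ha3) hα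
      have hh3R : b3 ^ (p ^ 3 + p ^ 2 + p + 1) * a4 ^ (p ^ 3 + p ^ 2 + p) ≠ 0 :=
        mul_ne_zero (pow_ne_zero _ hb3) (pow_ne_zero _ ha4)
      have S4 : b4 * α = α ^ p ^ 4 * a4 := by
        have M : (b4 * α) * (α ^ p * (a4 * b3)) ^ (p ^ 3 + p ^ 2 + p + 1) *
            (a3 ^ (p ^ 3 + p ^ 2 + p + 1) * b4 ^ (p ^ 3 + p ^ 2 + p)) =
          (α ^ p ^ 4 * a4) * ((b4 * a3) * α) ^ (p ^ 3 + p ^ 2 + p + 1) *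
            (b3 ^ (p ^ 3 + p ^ 2 + p + 1) * a4 ^ (p ^ 3 + p ^ 2 + p)) := by ring
        rw [K, h3] at M
        exact mul_right_cancel₀ (pow_ne_zero _ hKR) (mul_right_cancel₀ hh3R M)
      have S3 : b3 * α ^ p = α ^ p ^ 4 * a3 := by
        have M : (b3 * α ^ p) * (α ^ p * (a4 * b3)) ^ (p ^ 3 + p ^ 2 + p) *
            (a3 ^ (p ^ 3 + p ^ 2 + p + 1) * b4 ^ (p ^ 3 + p ^ 2 + p)) =
          (α ^ p ^ 4 * a3) * ((b4 * a3) * α) ^ (p ^ 3 + p ^ 2 + p) *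
            (b3 ^ (p ^ 3 + p ^ 2 + p + 1) * a4 ^ (p ^ 3 + p ^ 2 + p)) := by ring
        rw [K, h3] at M
        exact mul_right_cancel₀ (pow_ne_zero _ hKR) (mul_right_cancel₀ hh3R M)
      have S2 : b2 * α ^ p ^ 2 = α ^ p ^ 4 * a2 := by
        by_cases ha2 : a2 = 0
        · rw [ha2, hiff2.mp ha2]; ring
        · have hb2 : b2 ≠ 0 := fun h => ha2 (hiff2.mpr h)
          have hh6R : b2 * b3 ^ (p ^ 3 + p ^ 2) * a4 ^ (p ^ 3 + p ^ 2) ≠ 0 :=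
            mul_ne_zero (mul_ne_zero hb2 (pow_ne_zero _ hb3)) (pow_ne_zero _ ha4)
          have M : (b2 * α ^ p ^ 2) * (α ^ p * (a4 * b3)) ^ (p ^ 3 + p ^ 2) *
              (a2 * a3 ^ (p ^ 3 + p ^ 2) * b4 ^ (p ^ 3 + p ^ 2)) =
            (α ^ p ^ 4 * a2) * ((b4 * a3) * α) ^ (p ^ 3 + p ^ 2) *
              (b2 * b3 ^ (p ^ 3 + p ^ 2) * a4 ^ (p ^ 3 + p ^ 2)) := by ring
          rw [K, h6] at M
          exact mul_right_cancel₀ (pow_ne_zero _ hKR) (mul_right_cancel₀ hh6R M)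
      refine hmain α hα ?_ S2 S3 S4
      rw [ha1, hb1]; ring
  · -- Case A
    have hb1 : b1 ≠ 0 := fun h => ha1 (hiff1.mpr h)
    obtain ⟨α, hα, K⟩ := exists_scale (b4 ^ p * (a1 ^ p * a4)) (b1 ^ p * a4 ^ p * b4)
      (mul_ne_zero (pow_ne_zero _ hb4) (mul_ne_zero (pow_ne_zero _ ha1) ha4))
      (mul_ne_zero (mul_ne_zero (pow_ne_zero _ hb1) (pow_ne_zero _ ha4)) hb4)
      p hp.two_le
    have hKR : (b1 ^ p * a4 ^ p * b4) * α ≠ 0 :=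
      mul_ne_zero (mul_ne_zero (mul_ne_zero (pow_ne_zero _ hb1) (pow_ne_zero _ ha4)) hb4) hα
    have hh1R : b1 ^ (p ^ 3 + p ^ 2 + p + 1) * a4 ^ p ^ 3 ≠ 0 :=
      mul_ne_zero (pow_ne_zero _ hb1) (pow_ne_zero _ ha4)
    have S4 : b4 * α = α ^ p ^ 4 * a4 := by
      have M : (b4 * α) * (α ^ p * (b4 ^ p * (a1 ^ p * a4))) ^ (p ^ 3 + p ^ 2 + p + 1) *
          (b1 ^ (p ^ 3 + p ^ 2 + p + 1) * a4 ^ p ^ 3) ^ p =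
        (α ^ p ^ 4 * a4) * ((b1 ^ p * a4 ^ p * b4) * α) ^ (p ^ 3 + p ^ 2 + p + 1) *
          (a1 ^ (p ^ 3 + p ^ 2 + p + 1) * b4 ^ p ^ 3) ^ p := by ring
      rw [K, h1] at M
      exact mul_right_cancel₀ (pow_ne_zero _ hKR) (mul_right_cancel₀ (pow_ne_zero _ hh1R) M)
    have S1 : b1 * α ^ p ^ 3 = α ^ p ^ 4 * a1 := by
      have M : (b1 * α ^ p ^ 3) * (α ^ p * (b4 ^ p * (a1 ^ p * a4))) ^ p ^ 3 *
          (a1 ^ (p ^ 3 + p ^ 2 + p + 1) * b4 ^ p ^ 3) *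
          (b1 ^ (p ^ 3 + p ^ 2 + p + 1) * a4 ^ p ^ 3) ^ p =
        (α ^ p ^ 4 * a1) * ((b1 ^ p * a4 ^ p * b4) * α) ^ p ^ 3 *
          (b1 ^ (p ^ 3 + p ^ 2 + p + 1) * a4 ^ p ^ 3) *
          (a1 ^ (p ^ 3 + p ^ 2 + p + 1) * b4 ^ p ^ 3) ^ p := by ring
      rw [K, h1] at M
      exact mul_right_cancel₀ (pow_ne_zero _ hKR)
        (mul_right_cancel₀ hh1R (mul_right_cancel₀ (pow_ne_zero _ hh1R) M))
    have S2 : b2 * α ^ p ^ 2 = α ^ p ^ 4 * a2 := by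
      by_cases ha2 : a2 = 0
      · rw [ha2, hiff2.mp ha2]; ring
      · have hb2 : b2 ≠ 0 := fun h => ha2 (hiff2.mpr h)
        have hh4R : b1 ^ (p ^ 2 + p) * b2 * a4 ^ p ^ 2 ≠ 0 :=
          mul_ne_zero (mul_ne_zero (pow_ne_zero _ hb1) hb2) (pow_ne_zero _ ha4)
        have M : (b2 * α ^ p ^ 2) * (α ^ p * (b4 ^ p * (a1 ^ p * a4))) ^ (p ^ 3 + p ^ 2) *
            (a1 ^ (p ^ 2 + p) * a2 * b4 ^ p ^ 2) *
            (b1 ^ (p ^ 3 + p ^ 2 + p + 1) * a4 ^ p ^ 3) ^ p =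
          (α ^ p ^ 4 * a2) * ((b1 ^ p * a4 ^ p * b4) * α) ^ (p ^ 3 + p ^ 2) *
            (b1 ^ (p ^ 2 + p) * b2 * a4 ^ p ^ 2) *
            (a1 ^ (p ^ 3 + p ^ 2 + p + 1) * b4 ^ p ^ 3) ^ p := by ring
        rw [K, h1, h4] at M
        exact mul_right_cancel₀ (pow_ne_zero _ hKR)
          (mul_right_cancel₀ hh4R (mul_right_cancel₀ (pow_ne_zero _ hh1R) M))
    have S3 : b3 * α ^ p = α ^ p ^ 4 * a3 := by
      by_cases ha3 : a3 = 0
      · rw [ha3, hiff3.mp ha3]; ring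
      · have hb3 : b3 ≠ 0 := fun h => ha3 (hiff3.mpr h)
        have hh5R : b1 ^ p * b3 * a4 ^ p ≠ 0 :=
          mul_ne_zero (mul_ne_zero (pow_ne_zero _ hb1) hb3) (pow_ne_zero _ ha4)
        have M : (b3 * α ^ p) * (α ^ p * (b4 ^ p * (a1 ^ p * a4))) ^ (p ^ 3 + p ^ 2 + p) *
            (a1 ^ p * a3 * b4 ^ p) *
            (b1 ^ (p ^ 3 + p ^ 2 + p + 1) * a4 ^ p ^ 3) ^ p =
          (α ^ p ^ 4 * a3) * ((b1 ^ p * a4 ^ p * b4) * α) ^ (p ^ 3 + p ^ 2 + p) *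
            (b1 ^ p * b3 * a4 ^ p) *
            (a1 ^ (p ^ 3 + p ^ 2 + p + 1) * b4 ^ p ^ 3) ^ p := by ring
        rw [K, h1, h5] at M
        exact mul_right_cancel₀ (pow_ne_zero _ hKR)
          (mul_right_cancel₀ hh5R (mul_right_cancel₀ (pow_ne_zero _ hh1R) M))
    exact hmain α hα S1 S2 S3 S4
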